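/- Let α be irrational. Suppose (nₖ) is a sequence of positive integers and (mₖ) a sequence of integers such that nₖ → ∞ and lim_{k→∞} nₖ²(mₖ/nₖ - α) = -log a for some 0 < a < 1. Then lim_{k→∞} {nₖα}^{nₖ} = a. -/

import Mathlib

open Filter Real

theorem stmt_15 (α : ℝ) (hα : Irrational α) (a : ℝ) (ha : 0 < a) (ha1 : a < 1)
    (n : ℕ → ℕ) (m : ℕ → ℤ) (hn : ∀ k, 0 < n k)
    (hn' : Filter.Tendsto n Filter.atTop Filter.atTop)
    (hlim : Filter.Tendsto
      (fun k => (n k : ℝ) ^ 2 * ((m k : ℝ) / n k - α))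
      Filter.atTop (nhds (-Real.log a))) :
    Filter.Tendsto (fun k => Int.fract ((n k : ℝ) * α) ^ n k)
      Filter.atTop (nhds a) := by
  have hla : Real.log a < 0 := Real.log_neg ha ha1
  set d : ℕ → ℝ := fun k => (m k : ℝ) - (n k : ℝ) * α with hd
  have hne : ∀ k, (n k : ℝ) ≠ 0 := fun k => Nat.cast_ne_zero.mpr (hn k).ne'
  have hnd : Tendsto (fun k => (n k : ℝ) * d k) atTop (nhds (-Real.log a)) := by
    refine hlim.congr (fun k => ?_)
    have := hne k
    field_simp [hd]
    ring
  have hntend : Tendsto (fun k => (n k : ℝ)) atTop atTop :=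
    tendsto_natCast_atTop_atTop.comp hn'
  have hninv : Tendsto (fun k => ((n k : ℝ))⁻¹) atTop (nhds 0) :=
    hntend.inv_tendsto_atTop
  have hd0 : Tendsto d atTop (nhds 0) := by
    have := hnd.mul hninv
    rw [mul_zero] at this
    refine this.congr (fun k => ?_)
    exact (mul_div_cancel_left₀ (d k) (hne k))
  have hdpos : ∀ᶠ k in atTop, 0 < d k := by
    have hpos : ∀ᶠ k in atTop, 0 < (n k : ℝ) * d k :=
      hnd.eventually (eventually_gt_nhds (by linarith))
    filter_upwards [hpos] with k hk
    have hnk : (0:ℝ) < n k := Nat.cast_pos.mpr (hn k)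
    nlinarith
  have hdlt : ∀ᶠ k in atTop, d k < 1 :=
    hd0.eventually (eventually_lt_nhds (by norm_num))
  -- fract identity
  have hfract : ∀ᶠ k in atTop, Int.fract ((n k : ℝ) * α) = 1 - d k := by
    filter_upwards [hdpos, hdlt] with k h1 h2
    have hfloor : ⌊(n k : ℝ) * α⌋ = m k - 1 := by
      rw [Int.floor_eq_iff]
      constructor
      · push_cast
        simp only [hd] at h2
        linarith
      · push_cast
        simp only [hd] at h1
        linarith
    rw [Int.fract, hfloor]
    simp only [hd]
    push_cast
    ring
  -- slope limit
  have hderiv : HasDerivAt (fun t : ℝ => Real.log (1 - t)) (-1) 0 := by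
    have h1 : HasDerivAt (fun t : ℝ => 1 - t) (-1) 0 := by
      simpa using (hasDerivAt_id (0:ℝ)).const_sub 1
    have h2 : HasDerivAt Real.log 1⁻¹ (1 - 0) := by
      simpa using Real.hasDerivAt_log (by norm_num : (1:ℝ) - 0 ≠ 0)
    simpa [Function.comp_def] using h2.comp 0 h1
  have hslope : Tendsto (fun t : ℝ => Real.log (1 - t) / t) (nhdsWithin 0 {(0:ℝ)}ᶜ)
      (nhds (-1)) := by
    have := hasDerivAt_iff_tendsto_slope.mp hderiv
    refine this.congr (fun t => ?_)
    simp [slope, div_eq_inv_mul]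
  have hdW : Tendsto d atTop (nhdsWithin 0 {(0:ℝ)}ᶜ) := by
    refine tendsto_nhdsWithin_of_tendsto_nhds_of_eventually_within _ hd0 ?_
    filter_upwards [hdpos] with k hk
    exact hk.ne'
  have hlogslope : Tendsto (fun k => Real.log (1 - d k) / d k) atTop (nhds (-1)) :=
    hslope.comp hdW
  have hmain : Tendsto (fun k => (n k : ℝ) * Real.log (1 - d k)) atTop
      (nhds (Real.log a)) := by
    have := hnd.mul hlogslope
    have heq : (-Real.log a) * (-1) = Real.log a := by ring
    rw [heq] at this
    refine this.congr' ?_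
    filter_upwards [hdpos] with k hk
    field_simp
  have hexp : Tendsto (fun k => Real.exp ((n k : ℝ) * Real.log (1 - d k))) atTop
      (nhds a) := by
    have := (Real.continuous_exp.tendsto _).comp hmain
    simpa [Real.exp_log ha, Function.comp_def] using this
  refine hexp.congr' ?_
  filter_upwards [hdpos, hdlt, hfract] with k h1 h2 h3
  rw [h3, Real.exp_nat_mul, Real.exp_log (by linarith : (0:ℝ) < 1 - d k)]
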